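/- Let φ : [1]^m → [1]^n be an interval-preserving monotone function and k ≥ 0. Then the induced postcomposition map φ^{[k]} : ([1]^m)^{[k]} → ([1]^n)^{[k]} on posets of monotone functions from the chain [k] maps Boolean intervals onto Boolean intervals. -/
import Mathlib

/-- A subset of a poset is a Boolean interval if it is an interval order-isomorphic to
some finite Boolean lattice \`[1]^k\`. -/
def IsBooleanInterval {P : Type*} [Preorder P] (S : Set P) : Prop :=
  ∃ a b : P, a ≤ b ∧ S = Set.Icc a b ∧ ∃ k : ℕ, Nonempty (Set.Icc a b ≃o (Fin k → Bool))

/-- A function between preorders is interval-preserving if the image of every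
(nonempty) interval is an interval. -/
def IsIntervalPreserving {α β : Type*} [Preorder α] [Preorder β] (f : α → β) : Prop :=
  ∀ p q : α, p ≤ q → ∃ a b : β, f '' Set.Icc p q = Set.Icc a b

variable {k m : ℕ}

def Good (f g : Fin (k+1) →o (Fin m → Bool)) : Prop :=
  ∀ l l' : Fin (k+1), l < l' → g l ≤ f l'

lemma bool_ne_cases {a b : Bool} (hab : a ≤ b) (h : a ≠ b) : a = false ∧ b = true := by
  revert hab h; cases a <;> cases b <;> decide

lemma eq_true_of_true_le {x : Bool} (h : true ≤ x) : x = true := le_antisymm (Bool.le_true x) h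
lemma eq_false_of_le_false {x : Bool} (h : x ≤ false) : x = false := le_antisymm h (Bool.false_le x)

lemma image_Icc_eq {α β : Type*} [Preorder α] [PartialOrder β] {φ : α → β} (hm : Monotone φ)
    (hip : IsIntervalPreserving φ) {p q : α} (hpq : p ≤ q) :
    φ '' Set.Icc p q = Set.Icc (φ p) (φ q) := by
  obtain ⟨a, b, hab⟩ := hip p q hpq
  have hp : φ p ∈ Set.Icc a b := hab ▸ ⟨p, ⟨le_refl p, hpq⟩, rfl⟩
  have hq : φ q ∈ Set.Icc a b := hab ▸ ⟨q, ⟨hpq, le_refl q⟩, rfl⟩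
  have ha : a = φ p := by
    have hmem : a ∈ φ '' Set.Icc p q := by
      rw [hab]; exact ⟨le_refl a, le_trans hp.1 hp.2⟩
    obtain ⟨x, hx, hxa⟩ := hmem
    exact le_antisymm hp.1 (hxa ▸ hm hx.1)
  have hb : b = φ q := by
    have hmem : b ∈ φ '' Set.Icc p q := by
      rw [hab]; exact ⟨le_trans hq.1 hq.2, le_refl b⟩
    obtain ⟨x, hx, hxb⟩ := hmem
    exact le_antisymm (hxb ▸ hm hx.2) hq.2
  rw [hab, ha, hb]

/-- reindexing order iso on Bool-valued functions -/
def piReindex {α β : Type*} (e : α ≃ β) : (α → Bool) ≃o (β → Bool) where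
  toEquiv := e.arrowCongr (Equiv.refl Bool)
  map_rel_iff' := by
    intro x y
    constructor
    · intro h a
      have := h (e a)
      simpa using this
    · intro h b
      simpa using h (e.symm b)

lemma good_of_boolean {r : ℕ} {f g : Fin (k+1) →o (Fin m → Bool)} (hfg : f ≤ g)
    (e : ↥(Set.Icc f g) ≃o (Fin r → Bool)) : Good f g := by
  intro l l' hll' s
  by_contra hcon
  have hgl : g l s = true := by
    cases h : g l s
    · exact absurd (h ▸ Bool.false_le (f l' s)) hcon
    · rfl
  have hfl' : f l' s = false := by
    cases h : f l' s
    · rfl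
    · exact absurd (h ▸ Bool.le_true (g l s)) hcon
  have hlval : l.1 + 1 < k + 1 := by
    have h1 : l.1 < l'.1 := hll'
    have h2 : l'.1 < k + 1 := l'.isLt
    omega
  set l₂ : Fin (k+1) := ⟨l.1 + 1, hlval⟩ with hl₂def
  have hll2 : l < l₂ := by simp [Fin.lt_def, hl₂def]
  have hl2l' : l₂ ≤ l' := by
    have h1 : l.1 < l'.1 := hll'
    simp only [Fin.le_def, hl₂def]
    omega
  have hfl2 : f l₂ s = false :=
    eq_false_of_le_false (hfl' ▸ f.monotone hl2l' s)
  -- the element h of Icc f g : f with coordinate s switched on from l₂ onwards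
  have hmono : Monotone (fun (a : Fin (k+1)) => fun (t : Fin m) =>
      if t = s ∧ l₂ ≤ a then true else f a t) := by
    intro a b hab t
    show (if t = s ∧ l₂ ≤ a then true else f a t) ≤ (if t = s ∧ l₂ ≤ b then true else f b t)
    by_cases hc : t = s ∧ l₂ ≤ b
    · rw [if_pos hc]; exact Bool.le_true _
    · rw [if_neg hc, if_neg (fun hca => hc ⟨hca.1, le_trans hca.2 hab⟩)]
      exact f.monotone hab t
  have hmem : (⟨_, hmono⟩ : Fin (k+1) →o (Fin m → Bool)) ∈ Set.Icc f g := by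
    constructor
    · intro a t
      show f a t ≤ if t = s ∧ l₂ ≤ a then true else f a t
      by_cases hc : t = s ∧ l₂ ≤ a
      · rw [if_pos hc]; exact Bool.le_true _
      · rw [if_neg hc]
    · intro a t
      show (if t = s ∧ l₂ ≤ a then true else f a t) ≤ g a t
      by_cases hc : t = s ∧ l₂ ≤ a
      · rw [if_pos hc, hc.1]
        have : g a s = true :=
          eq_true_of_true_le (hgl ▸ g.monotone (le_of_lt (lt_of_lt_of_le hll2 hc.2)) s)
        rw [this]
      · rw [if_neg hc]; exact hfg a t
  set hB : ↥(Set.Icc f g) := ⟨⟨_, hmono⟩, hmem⟩ with hBdef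
  set H : ↥(Set.Icc f g) := e.symm ((e hB)ᶜ) with hHdef
  have heH : e H = (e hB)ᶜ := e.apply_symm_apply _
  set f' : ↥(Set.Icc f g) := ⟨f, ⟨le_refl f, hfg⟩⟩ with hf'def
  set g' : ↥(Set.Icc f g) := ⟨g, ⟨hfg, le_refl g⟩⟩ with hg'def
  have hbot : e f' = ⊥ := by
    apply le_antisymm _ bot_le
    have h1 : f' ≤ e.symm ⊥ := (e.symm ⊥).2.1
    have h2 : e f' ≤ e (e.symm ⊥) := e.le_iff_le.mpr h1
    rwa [e.apply_symm_apply] at h2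
  have htop : e g' = ⊤ := by
    apply le_antisymm le_top
    have h1 : e.symm ⊤ ≤ g' := (e.symm ⊤).2.2
    have h2 : e (e.symm ⊤) ≤ e g' := e.le_iff_le.mpr h1
    rwa [e.apply_symm_apply] at h2
  -- Claim (i): (H : OrderHom) l s = true
  have hHl : (H : Fin (k+1) →o (Fin m → Bool)) l s = true := by
    by_contra hH
    rw [Bool.not_eq_true] at hH
    -- the element z : g with coordinate s switched off up to index l
    have zmono : Monotone (fun (a : Fin (k+1)) => fun (t : Fin m) =>
        if t = s ∧ a ≤ l then false else g a t) := by
      intro a b hab t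
      show (if t = s ∧ a ≤ l then false else g a t) ≤ (if t = s ∧ b ≤ l then false else g b t)
      by_cases hc : t = s ∧ a ≤ l
      · by_cases hcb : t = s ∧ b ≤ l
        · rw [if_pos hc, if_pos hcb]
        · rw [if_pos hc]; exact Bool.false_le _
      · rw [if_neg hc, if_neg (fun hcb => hc ⟨hcb.1, le_trans hab hcb.2⟩)]
        exact g.monotone hab t
    have zmem : (⟨_, zmono⟩ : Fin (k+1) →o (Fin m → Bool)) ∈ Set.Icc f g := by
      constructor
      · intro a t
        show f a t ≤ if t = s ∧ a ≤ l then false else g a t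
        by_cases hc : t = s ∧ a ≤ l
        · rw [if_pos hc, hc.1]
          have : f a s = false :=
            eq_false_of_le_false (hfl2 ▸ f.monotone (le_of_lt (lt_of_le_of_lt hc.2 hll2)) s)
          rw [this]
        · rw [if_neg hc]; exact hfg a t
      · intro a t
        show (if t = s ∧ a ≤ l then false else g a t) ≤ g a t
        by_cases hc : t = s ∧ a ≤ l
        · rw [if_pos hc]; exact Bool.false_le _
        · rw [if_neg hc]
    set z : ↥(Set.Icc f g) := ⟨⟨_, zmono⟩, zmem⟩ with hzdef
    have hhz : hB ≤ z := by
      intro a t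
      show (if t = s ∧ l₂ ≤ a then true else f a t) ≤ (if t = s ∧ a ≤ l then false else g a t)
      by_cases hc : t = s ∧ a ≤ l
      · rw [if_pos hc]
        have hnot : ¬ (t = s ∧ l₂ ≤ a) := by
          rintro ⟨-, h2⟩
          exact absurd (lt_of_lt_of_le hll2 (le_trans h2 hc.2)) (lt_irrefl l)
        rw [if_neg hnot, hc.1]
        have : f a s = false :=
          eq_false_of_le_false (hfl2 ▸ f.monotone (le_of_lt (lt_of_le_of_lt hc.2 hll2)) s)
        rw [this]
      · rw [if_neg hc]
        by_cases hc2 : t = s ∧ l₂ ≤ a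
        · rw [if_pos hc2, hc2.1]
          have : g a s = true :=
            eq_true_of_true_le (hgl ▸ g.monotone (le_of_lt (lt_of_lt_of_le hll2 hc2.2)) s)
          rw [this]
        · rw [if_neg hc2]; exact hfg a t
    have hHz : H ≤ z := by
      intro a t
      show (H : Fin (k+1) →o (Fin m → Bool)) a t ≤ (if t = s ∧ a ≤ l then false else g a t)
      by_cases hc : t = s ∧ a ≤ l
      · rw [if_pos hc]
        have h1 : (H : Fin (k+1) →o (Fin m → Bool)) a t ≤
            (H : Fin (k+1) →o (Fin m → Bool)) l t :=
          (H : Fin (k+1) →o (Fin m → Bool)).monotone hc.2 t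
        rw [hc.1] at h1 ⊢
        rw [hH] at h1
        exact h1
      · rw [if_neg hc]; exact H.2.2 a t
    have h1 : e hB ≤ e z := e.le_iff_le.mpr hhz
    have h2 : (e hB)ᶜ ≤ e z := heH ▸ e.le_iff_le.mpr hHz
    have h3 : e z = ⊤ := by
      apply le_antisymm le_top
      calc (⊤ : Fin r → Bool) = e hB ⊔ (e hB)ᶜ := (sup_compl_eq_top).symm
        _ ≤ e z := sup_le h1 h2
    have hzg : z = g' := e.injective (by rw [h3, htop])
    have hval : (z : Fin (k+1) →o (Fin m → Bool)) = g := congrArg Subtype.val hzg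
    have hls : (z : Fin (k+1) →o (Fin m → Bool)) l s = g l s := by rw [hval]
    rw [hzdef] at hls
    simp only [OrderHom.coe_mk] at hls
    simp [hgl] at hls
  -- Claim (ii): (H : OrderHom) l₂ s = false
  have hHl2 : (H : Fin (k+1) →o (Fin m → Bool)) l₂ s = false := by
    by_contra hH
    rw [Bool.not_eq_false] at hH
    have hhH : hB ≤ H := by
      intro a t
      show (if t = s ∧ l₂ ≤ a then true else f a t) ≤ (H : Fin (k+1) →o (Fin m → Bool)) a t
      by_cases hc : t = s ∧ l₂ ≤ a
      · rw [if_pos hc, hc.1]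
        have h1 : (H : Fin (k+1) →o (Fin m → Bool)) l₂ s ≤
            (H : Fin (k+1) →o (Fin m → Bool)) a s :=
          (H : Fin (k+1) →o (Fin m → Bool)).monotone hc.2 s
        rw [hH] at h1
        rw [eq_true_of_true_le h1]
      · rw [if_neg hc]; exact H.2.1 a t
    have h1 : e hB ≤ e H := e.le_iff_le.mpr hhH
    rw [heH] at h1
    have h2 : e hB ≤ ⊥ := by
      calc e hB ≤ e hB ⊓ (e hB)ᶜ := le_inf (le_refl _) h1
        _ = ⊥ := inf_compl_eq_bot
    have hzb : hB = f' := e.injective (by rw [le_antisymm h2 bot_le, hbot])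
    have hval : (hB : Fin (k+1) →o (Fin m → Bool)) = f := congrArg Subtype.val hzb
    have hls : (hB : Fin (k+1) →o (Fin m → Bool)) l₂ s = f l₂ s := by rw [hval]
    rw [hBdef] at hls
    simp only [OrderHom.coe_mk] at hls
    simp [hfl2] at hls
  have hmono := (H : Fin (k+1) →o (Fin m → Bool)).monotone (le_of_lt hll2) s
  rw [hHl, hHl2] at hmono
  exact Bool.noConfusion (eq_false_of_le_false hmono)

lemma boolean_of_good {f g : Fin (k+1) →o (Fin m → Bool)} (hfg : f ≤ g) (hgood : Good f g) :
    IsBooleanInterval (Set.Icc f g) := by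
  refine ⟨f, g, hfg, rfl, ?_⟩
  set D := {p : Fin (k+1) × Fin m // f p.1 p.2 ≠ g p.1 p.2} with hD
  have hle : ∀ (l : Fin (k+1)) (t : Fin m), f l t ≤ g l t := fun l t => hfg l t
  -- construct iso Set.Icc f g ≃o (D → Bool)
  have hinv : ∀ χ : D → Bool, Monotone (fun (l : Fin (k+1)) => fun (t : Fin m) =>
      if h : f l t ≠ g l t then χ ⟨(l, t), h⟩ else f l t) := by
    intro χ l l' hll' t
    rcases eq_or_lt_of_le hll' with rfl | hlt
    · exact le_refl _
    have h1 : (if h : f l t ≠ g l t then χ ⟨(l, t), h⟩ else f l t) ≤ g l t := by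
      by_cases h : f l t ≠ g l t
      · rw [dif_pos h, (bool_ne_cases (hle l t) h).2]; exact Bool.le_true _
      · rw [dif_neg h]; exact hle l t
    have h2 : f l' t ≤ (if h : f l' t ≠ g l' t then χ ⟨(l', t), h⟩ else f l' t) := by
      by_cases h : f l' t ≠ g l' t
      · rw [dif_pos h, (bool_ne_cases (hle l' t) h).1]; exact Bool.false_le _
      · rw [dif_neg h]
    exact le_trans h1 (le_trans (hgood l l' hlt t) h2)
  let inv : (D → Bool) → ↥(Set.Icc f g) := fun χ =>
    ⟨⟨fun l t => if h : f l t ≠ g l t then χ ⟨(l, t), h⟩ else f l t, hinv χ⟩, by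
      constructor
      · intro l t
        show f l t ≤ (if h : f l t ≠ g l t then χ ⟨(l, t), h⟩ else f l t)
        by_cases h : f l t ≠ g l t
        · rw [dif_pos h, (bool_ne_cases (hle l t) h).1]; exact Bool.false_le _
        · rw [dif_neg h]
      · intro l t
        show (if h : f l t ≠ g l t then χ ⟨(l, t), h⟩ else f l t) ≤ g l t
        by_cases h : f l t ≠ g l t
        · rw [dif_pos h, (bool_ne_cases (hle l t) h).2]; exact Bool.le_true _
        · rw [dif_neg h]; exact hle l t⟩
  have heqsq : ∀ (H : ↥(Set.Icc f g)) (l : Fin (k+1)) (t : Fin m),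
      f l t = g l t → (H : Fin (k+1) →o (Fin m → Bool)) l t = f l t := by
    intro H l t hft
    have h1 : f l t ≤ (H : Fin (k+1) →o (Fin m → Bool)) l t := H.2.1 l t
    have h2 : (H : Fin (k+1) →o (Fin m → Bool)) l t ≤ g l t := H.2.2 l t
    rw [← hft] at h2
    exact le_antisymm h2 h1
  let iso1 : ↥(Set.Icc f g) ≃o (D → Bool) :=
    { toFun := fun H => fun d => (H : Fin (k+1) →o (Fin m → Bool)) d.1.1 d.1.2
      invFun := inv
      left_inv := by
        intro H
        apply Subtype.ext
        apply OrderHom.ext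
        funext l t
        show (if h : f l t ≠ g l t then _ else f l t) = _
        by_cases h : f l t ≠ g l t
        · rw [dif_pos h]
        · rw [dif_neg h]
          push_neg at h
          exact (heqsq H l t h).symm
      right_inv := by
        intro χ
        funext d
        show (if h : f d.1.1 d.1.2 ≠ g d.1.1 d.1.2 then χ ⟨(d.1.1, d.1.2), h⟩ else _) = χ d
        rw [dif_pos d.2]
      map_rel_iff' := by
        intro H H'
        constructor
        · intro h
          intro l t
          show (H : Fin (k+1) →o (Fin m → Bool)) l t ≤ (H' : Fin (k+1) →o (Fin m → Bool)) l t
          by_cases hd : f l t ≠ g l t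
          · exact h ⟨(l, t), hd⟩
          · push_neg at hd
            rw [heqsq H l t hd, heqsq H' l t hd]
        · intro h d
          exact h d.1.1 d.1.2 }
  exact ⟨Fintype.card D, ⟨iso1.trans (piReindex (Fintype.equivFin D))⟩⟩

/-- For an interval-preserving monotone `φ : [1]^m → [1]^n`, the induced
postcomposition map `φ^{[k]}` on posets of monotone functions from the chain `[k]` maps
Boolean intervals onto Boolean intervals. -/
theorem stmt_17 {m n k : ℕ} (φ : (Fin m → Bool) → (Fin n → Bool)) (hm : Monotone φ)
    (hip : IsIntervalPreserving φ) :
    ∀ S : Set (Fin (k + 1) →o (Fin m → Bool)), IsBooleanInterval S →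
      IsBooleanInterval
        ((fun f => (⟨φ, hm⟩ : (Fin m → Bool) →o (Fin n → Bool)).comp f) '' S) := by
  rintro S ⟨f, g, hfg, rfl, r, ⟨e⟩⟩
  have hgood : Good f g := good_of_boolean hfg e
  have himg : (fun f0 => (⟨φ, hm⟩ : (Fin m → Bool) →o (Fin n → Bool)).comp f0) '' Set.Icc f g
      = Set.Icc ((⟨φ, hm⟩ : (Fin m → Bool) →o (Fin n → Bool)).comp f)
        ((⟨φ, hm⟩ : (Fin m → Bool) →o (Fin n → Bool)).comp g) := by
    ext h
    constructor
    · rintro ⟨x, hx, rfl⟩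
      exact ⟨fun a => hm (hx.1 a), fun a => hm (hx.2 a)⟩
    · intro hh
      have hmemp : ∀ a : Fin (k+1), h a ∈ φ '' Set.Icc (f a) (g a) := by
        intro a
        rw [image_Icc_eq hm hip (show f a ≤ g a from hfg a)]
        exact ⟨hh.1 a, hh.2 a⟩
      choose x hx hφx using hmemp
      have hxm : Monotone x := by
        intro a b hab
        rcases eq_or_lt_of_le hab with rfl | hlt
        · exact le_refl _
        · exact le_trans (hx a).2 (le_trans (hgood a b hlt) (hx b).1)
      exact ⟨⟨x, hxm⟩, ⟨fun a => (hx a).1, fun a => (hx a).2⟩,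
        OrderHom.ext _ _ (funext hφx)⟩
  rw [himg]
  exact boolean_of_good (fun a => hm (hfg a))
    (fun l l' hll' => hm (hgood l l' hll'))
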